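/- Let L ≥ 1 and N ≥ 1 be integers and let y₁,…,y_N be pairwise distinct complex numbers. Define, for x ∈ ℂ with x ≠ i y_j for all j, λ(x) = (ω⁻¹x+1)^L ∏_{j=1}^N (ωx − i y_j)/(x − i y_j) + (ωx−1)^L ∏_{j=1}^N (ω⁻¹x − i y_j)/(x − i y_j). Then there exists a polynomial p with p(x) = λ(x) for all such x if and only if the Bethe ansatz equations hold: for every j ∈ {1,…,N}, (i ω⁻¹ y_j + 1)^L ∏_{k=1}^N (ω y_j − y_k) + (i ω y_j − 1)^L ∏_{k=1}^N (ω⁻¹ y_j − y_k) = 0. -/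

import Mathlib

noncomputable section

open Polynomial Complex

/-- ω = e^{2πi/3}. -/
def ω : ℂ := Complex.exp (2 * Real.pi * Complex.I / 3)

/-- the eigenvalue expression
λ(x) = (ω⁻¹x+1)^L ∏_j (ωx−iy_j)/(x−iy_j) + (ωx−1)^L ∏_j (ω⁻¹x−iy_j)/(x−iy_j)
extends to a polynomial in x if and only if the Bethe ansatz equations
(iω⁻¹y_j+1)^L ∏_k (ωy_j−y_k) + (iωy_j−1)^L ∏_k (ω⁻¹y_j−y_k) = 0 hold for all j. -/
theorem polynomial_iff_bethe (L N : ℕ) (hL : 1 ≤ L) (hN : 1 ≤ N)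
    (y : Fin N → ℂ) (hy : Function.Injective y) :
    (∃ p : Polynomial ℂ, ∀ x : ℂ, (∀ j, x ≠ Complex.I * y j) →
        p.eval x =
          (ω⁻¹ * x + 1) ^ L * ∏ j, (ω * x - Complex.I * y j) / (x - Complex.I * y j)
            + (ω * x - 1) ^ L * ∏ j, (ω⁻¹ * x - Complex.I * y j) / (x - Complex.I * y j))
      ↔ (∀ j, (Complex.I * ω⁻¹ * y j + 1) ^ L * ∏ k, (ω * y j - y k)
            + (Complex.I * ω * y j - 1) ^ L * ∏ k, (ω⁻¹ * y j - y k) = 0) := by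
  set D : Polynomial ℂ := ∏ j, (X - C (Complex.I * y j)) with hD
  set F : Polynomial ℂ :=
    (C ω⁻¹ * X + 1) ^ L * ∏ j, (C ω * X - C (Complex.I * y j))
      + (C ω * X - 1) ^ L * ∏ j, (C ω⁻¹ * X - C (Complex.I * y j)) with hF
  have hFeval : ∀ x : ℂ, F.eval x =
      (ω⁻¹ * x + 1) ^ L * ∏ j, (ω * x - Complex.I * y j)
        + (ω * x - 1) ^ L * ∏ j, (ω⁻¹ * x - Complex.I * y j) := by
    intro x
    simp [hF, eval_prod]
  have hDeval : ∀ x : ℂ, D.eval x = ∏ j, (x - Complex.I * y j) := by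
    intro x; simp [hD, eval_prod]
  have hIy : Function.Injective (fun j => Complex.I * y j) := by
    intro a b h
    exact hy (mul_left_cancel₀ Complex.I_ne_zero h)
  -- value of F at the poles
  have hFroot : ∀ j, F.eval (Complex.I * y j) =
      Complex.I ^ N *
        ((Complex.I * ω⁻¹ * y j + 1) ^ L * ∏ k, (ω * y j - y k)
          + (Complex.I * ω * y j - 1) ^ L * ∏ k, (ω⁻¹ * y j - y k)) := by
    intro j
    rw [hFeval]
    have hprod : (Complex.I : ℂ) ^ N = ∏ _k : Fin N, Complex.I := by simp
    have h1 : ∏ k, (ω * (Complex.I * y j) - Complex.I * y k)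
        = Complex.I ^ N * ∏ k, (ω * y j - y k) := by
      rw [hprod, ← Finset.prod_mul_distrib]
      exact Finset.prod_congr rfl fun k _ => by ring
    have h2 : ∏ k, (ω⁻¹ * (Complex.I * y j) - Complex.I * y k)
        = Complex.I ^ N * ∏ k, (ω⁻¹ * y j - y k) := by
      rw [hprod, ← Finset.prod_mul_distrib]
      exact Finset.prod_congr rfl fun k _ => by ring
    rw [h1, h2]
    ring_nf
  have hIN : (Complex.I : ℂ) ^ N ≠ 0 := pow_ne_zero _ Complex.I_ne_zero
  constructor
  · rintro ⟨p, hp⟩ j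
    -- p * D = F as polynomials
    have hset : Set.Infinite {x : ℂ | (p * D).eval x = F.eval x} := by
      have hsub : (Set.range (fun j => Complex.I * y j))ᶜ ⊆
          {x : ℂ | (p * D).eval x = F.eval x} := by
        intro x hx
        have hx' : ∀ j, x ≠ Complex.I * y j := by
          intro j h
          exact hx ⟨j, h.symm⟩
        have hdk : ∀ k : Fin N, x - Complex.I * y k ≠ 0 := fun k =>
          sub_ne_zero.mpr (hx' k)
        have hdv : ∏ k, (x - Complex.I * y k) ≠ 0 :=
          Finset.prod_ne_zero_iff.mpr fun k _ => hdk k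
        have := hp x hx'
        simp only [Set.mem_setOf_eq, eval_mul, this, hDeval, hFeval]
        rw [Finset.prod_div_distrib, Finset.prod_div_distrib]
        field_simp
      exact Set.Infinite.mono hsub
        ((Set.finite_range _).infinite_compl)
    have hpd : p * D = F := Polynomial.eq_of_infinite_eval_eq _ _ hset
    have hD0 : D.eval (Complex.I * y j) = 0 := by
      rw [hDeval]
      exact Finset.prod_eq_zero (Finset.mem_univ j) (by ring)
    have : F.eval (Complex.I * y j) = 0 := by
      rw [← hpd, eval_mul, hD0, mul_zero]
    rw [hFroot j] at this
    exact (mul_eq_zero.mp this).resolve_left hIN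
  · intro hB
    -- D divides F
    have hdvd : D ∣ F := by
      refine Fintype.prod_dvd_of_coprime
        (Polynomial.pairwise_coprime_X_sub_C hIy) fun j => ?_
      rw [Polynomial.dvd_iff_isRoot, IsRoot, hFroot j, hB j, mul_zero]
    obtain ⟨q, hq⟩ := hdvd
    refine ⟨q, fun x hx => ?_⟩
    have hdk : ∀ k : Fin N, x - Complex.I * y k ≠ 0 := fun k =>
      sub_ne_zero.mpr (hx k)
    have hdv : ∏ k, (x - Complex.I * y k) ≠ 0 :=
      Finset.prod_ne_zero_iff.mpr fun k _ => hdk k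
    have hFx := hFeval x
    rw [hq, eval_mul, hDeval] at hFx
    rw [Finset.prod_div_distrib, Finset.prod_div_distrib, mul_div_assoc',
      mul_div_assoc', ← add_div, eq_div_iff hdv]
    linear_combination hFx
end
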